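/- Let ρ_j (j ∈ ℤ₊) be positive integers and ψ^m_j ∈ L₂ for m = 1,…,ρ_j. If the family Ψ = {S^k_j ψ^m_j : j ∈ ℤ₊, m = 1,…,ρ_j, k ∈ R_j} forms a Parseval wavelet frame in L₂, then Σ_{q=0}^{j} 2^q Σ_{m=1}^{ρ_q} conj(ψ̂^m_q(n)) · ψ̂^m_q(2^j k + n) = 0 for every odd integer k, every n ∈ ℤ and every j ∈ ℤ₊. -/

import Mathlib

open MeasureTheory Complex Finset Filter ComplexConjugate

noncomputable section

instance : Fact ((0:ℝ) < 1) := ⟨one_pos⟩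

/-- The space `L₂` of 1-periodic square-integrable complex functions, realized as
`Lp ℂ 2` over the additive circle of length 1 with normalized Haar measure. -/
abbrev PL2 : Type := Lp ℂ 2 (@AddCircle.haarAddCircle (1 : ℝ) _)

/-- Fourier coefficient `f̂(n) = ∫₀¹ f(x) e^{-2πinx} dx`. -/
def fCoeff (f : PL2) (n : ℤ) : ℂ := fourierCoeff (f : AddCircle (1 : ℝ) → ℂ) n

/-- Inner product `⟨f, S^k_j g⟩ = ∫₀¹ f(x) conj(g(x + 2^{-j} k)) dx`. -/
def shiftInner (f g : PL2) (j : ℕ) (k : ℤ) : ℂ :=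
  ∫ x : AddCircle (1 : ℝ),
    f x * conj (g (x + (((2:ℝ)^(-(j:ℤ)) * (k:ℝ) : ℝ) : AddCircle (1 : ℝ))))
    ∂AddCircle.haarAddCircle

/-- `R_j = {-2^{j-1}+1, …, 2^{j-1}}` for `j ≥ 1` and `R₀ = {0}`. -/
def Rset (j : ℕ) : Finset ℤ :=
  if j = 0 then {0} else Finset.Icc (-(2^(j-1) : ℤ) + 1) (2^(j-1))

/-- The system `{S^k_j ψ^m_j : j ∈ ℤ₊, 1 ≤ m ≤ ρ_j, k ∈ R_j}` is a Parseval wavelet frame. -/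
def IsParsevalFrame (ρ : ℕ → ℕ) (ψ : ℕ → ℕ → PL2) : Prop :=
  ∀ f : PL2, ‖f‖^2 =
    ∑' j : ℕ, ∑ m ∈ Finset.Icc 1 (ρ j), ∑ k ∈ Rset j,
      (‖shiftInner f (ψ j m) j k‖)^2

/-! ### Auxiliary: translation on `PL2` -/

def transLp (a : AddCircle (1:ℝ)) (g : PL2) : PL2 :=
  Lp.compMeasurePreserving (fun x => x + a)
    (measurePreserving_add_right AddCircle.haarAddCircle a) g

lemma coeFn_transLp (a : AddCircle (1:ℝ)) (g : PL2) :
    (transLp a g : AddCircle (1:ℝ) → ℂ) =ᵐ[AddCircle.haarAddCircle] fun x => g (x + a) :=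
  Lp.coeFn_compMeasurePreserving g _

lemma inner_transLp (f g : PL2) (a : AddCircle (1:ℝ)) :
    (inner ℂ (transLp a g) f : ℂ)
      = ∫ x : AddCircle (1:ℝ), f x * conj (g (x + a)) ∂AddCircle.haarAddCircle := by
  rw [MeasureTheory.L2.inner_def]
  apply integral_congr_ae
  filter_upwards [coeFn_transLp a g] with x hx
  rw [RCLike.inner_apply, hx, mul_comm]

open Real in
lemma fourier_translate (n : ℤ) (x a : AddCircle (1:ℝ)) :
    fourier n (x + a) = fourier n x * fourier n a := by
  simp_rw [fourier_apply, smul_add, AddCircle.toCircle_add, Circle.coe_mul]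

open Real in
lemma fourierCoeff_transLp (a : ℝ) (g : PL2) (n : ℤ) :
    fourierCoeff (transLp (↑a) g : AddCircle (1:ℝ) → ℂ) n
      = Complex.exp (2 * π * I * n * a) * fourierCoeff (g : AddCircle (1:ℝ) → ℂ) n := by
  set aC : AddCircle (1:ℝ) := ((a : ℝ) : AddCircle (1:ℝ)) with haC
  set aC' : AddCircle (1:ℝ) := ((-a : ℝ) : AddCircle (1:ℝ)) with haC'
  have hsum0 : aC + aC' = 0 := by
    rw [haC, haC', ← QuotientAddGroup.mk_add]
    norm_num
  have h1 : fourierCoeff (transLp aC g : AddCircle (1:ℝ) → ℂ) n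
      = ∫ t : AddCircle (1:ℝ), fourier (-n) t * g (t + aC) ∂AddCircle.haarAddCircle := by
    unfold fourierCoeff
    apply integral_congr_ae
    filter_upwards [coeFn_transLp aC g] with t ht
    rw [smul_eq_mul, ht]
  rw [h1]
  have h2 : ∀ t : AddCircle (1:ℝ), fourier (-n) t * g (t + aC)
      = (fun y => fourier (-n) (y + aC') * g y) (t + aC) := by
    intro t
    have : t + aC + aC' = t := by rw [add_assoc, hsum0, add_zero]
    simp only [this]
  rw [integral_congr_ae (Filter.Eventually.of_forall h2)]
  rw [(measurePreserving_add_right AddCircle.haarAddCircle aC).integral_comp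
      (MeasurableEquiv.addRight aC).measurableEmbedding
      (fun y => fourier (-n) (y + aC') * g y)]
  have h3 : ∀ y : AddCircle (1:ℝ), fourier (-n) (y + aC') * g y
      = Complex.exp (2 * π * I * n * a) * (fourier (-n) y * g y) := by
    intro y
    rw [fourier_translate]
    have : fourier (-n) aC' = Complex.exp (2 * π * I * n * a) := by
      rw [haC', fourier_coe_apply]
      push_cast
      ring_nf
    rw [this]
    ring
  rw [integral_congr_ae (Filter.Eventually.of_forall h3), integral_const_mul]
  rfl

/-! ### Auxiliary: abstract polarization for Parseval-type families -/

section Abstract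
variable {E : Type*} [NormedAddCommGroup E] [InnerProductSpace ℂ E]

local notation "⟪" x ", " y "⟫" => @inner ℂ _ _ x y

lemma scalar_polar (a b : ℂ) :
    conj a * b = (((‖a+b‖^2 : ℝ) : ℂ) - ((‖a-b‖^2 : ℝ) : ℂ)
      + (((‖a - I*b‖^2 : ℝ) : ℂ) - ((‖a + I*b‖^2 : ℝ) : ℂ)) * I) / 4 := by
  have h : ∀ z : ℂ, ((‖z‖^2 : ℝ) : ℂ) = conj z * z := by
    intro z
    rw [Complex.sq_norm, Complex.normSq_eq_conj_mul_self]
  simp only [h, map_add, map_sub, map_mul, Complex.conj_I]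
  ring_nf
  simp [Complex.I_sq]
  ring

lemma parseval_polar (ρ : ℕ → ℕ) (u : ℕ → ℕ → ℤ → E)
    (h : ∀ f : E, ‖f‖^2 = ∑' j : ℕ, ∑ m ∈ Finset.Icc 1 (ρ j), ∑ k ∈ Rset j,
        ‖⟪u j m k, f⟫‖^2)
    (f g : E) :
    ∑' j : ℕ, ∑ m ∈ Finset.Icc 1 (ρ j), ∑ k ∈ Rset j,
        conj ⟪u j m k, f⟫ * ⟪u j m k, g⟫ = ⟪f, g⟫ := by
  set Q : E → ℕ → ℝ := fun v j => ∑ m ∈ Finset.Icc 1 (ρ j), ∑ k ∈ Rset j,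
      ‖⟪u j m k, v⟫‖^2 with hQ
  have hQv : ∀ v : E, ‖v‖^2 = ∑' j, Q v j := fun v => h v
  have hsum : ∀ v : E, Summable (Q v) := by
    intro v
    by_cases hv : v = 0
    · subst hv
      have : Q 0 = fun _ => 0 := by funext j; simp [hQ]
      rw [this]; exact summable_zero
    · by_contra hns
      have h0 : ∑' j, Q v j = 0 := tsum_eq_zero_of_not_summable hns
      have hv2 := hQv v
      rw [h0] at hv2
      have : ‖v‖ = 0 := by nlinarith [norm_nonneg v]
      exact hv (norm_eq_zero.mp this)
  have hsumC : ∀ v : E, Summable (fun j => ((Q v j : ℝ) : ℂ)) := fun v =>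
    (Complex.ofRealCLM : ℝ →L[ℝ] ℂ).summable (hsum v)
  have htsumC : ∀ v : E, ∑' j, ((Q v j : ℝ) : ℂ) = ((‖v‖^2 : ℝ) : ℂ) := by
    intro v
    rw [← Complex.ofReal_tsum, ← hQv v]
  have pt : ∀ j, (∑ m ∈ Finset.Icc 1 (ρ j), ∑ k ∈ Rset j,
        conj ⟪u j m k, f⟫ * ⟪u j m k, g⟫)
      = (((Q (f+g) j : ℝ) : ℂ) - ((Q (f-g) j : ℝ) : ℂ)
        + (((Q (f - I•g) j : ℝ) : ℂ) - ((Q (f + I•g) j : ℝ) : ℂ)) * I) / 4 := by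
    intro j
    have e1 : ∀ m ∈ Finset.Icc 1 (ρ j), ∀ k ∈ Rset j,
        conj ⟪u j m k, f⟫ * ⟪u j m k, g⟫
        = (((‖⟪u j m k, f + g⟫‖^2 : ℝ) : ℂ)
            - ((‖⟪u j m k, f - g⟫‖^2 : ℝ) : ℂ)
          + (((‖⟪u j m k, f - I•g⟫‖^2 : ℝ) : ℂ)
            - ((‖⟪u j m k, f + I•g⟫‖^2 : ℝ) : ℂ)) * I) / 4 := by
      intro m _ k _
      simp only [inner_add_right, inner_sub_right, inner_smul_right]
      exact scalar_polar _ _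
    rw [Finset.sum_congr rfl (fun m hm => Finset.sum_congr rfl (fun k hk => e1 m hm k hk))]
    simp only [hQ]
    push_cast
    simp only [← Finset.sum_div]
    congr 1
    simp [Finset.sum_sub_distrib, Finset.sum_add_distrib, ← Finset.sum_mul]
  rw [tsum_congr pt]
  have hcomb : ∑' j, ((((Q (f+g) j : ℝ) : ℂ) - ((Q (f-g) j : ℝ) : ℂ)
        + (((Q (f - I•g) j : ℝ) : ℂ) - ((Q (f + I•g) j : ℝ) : ℂ)) * I) / 4)
      = ((∑' j, ((Q (f+g) j : ℝ) : ℂ)) - (∑' j, ((Q (f-g) j : ℝ) : ℂ))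
        + ((∑' j, ((Q (f - I•g) j : ℝ) : ℂ)) - (∑' j, ((Q (f + I•g) j : ℝ) : ℂ))) * I) / 4 := by
    rw [tsum_div_const]
    congr 1
    rw [Summable.tsum_add (((hsumC _).sub (hsumC _))) (((hsumC _).sub (hsumC _)).mul_right I),
      Summable.tsum_sub (hsumC _) (hsumC _), tsum_mul_right, Summable.tsum_sub (hsumC _) (hsumC _)]
  have hv : ∀ v : E, ((‖v‖^2 : ℝ) : ℂ) = ⟪v, v⟫ := by
    intro v
    rw [inner_self_eq_norm_sq_to_K]
    push_cast
    rfl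
  rw [hcomb, htsumC, htsumC, htsumC, htsumC, hv, hv, hv, hv]
  simp only [inner_add_left, inner_add_right, inner_sub_left, inner_sub_right,
    inner_smul_left, inner_smul_right, Complex.conj_I]
  ring_nf
  simp [Complex.I_sq]
  ring

end Abstract

/-! ### Auxiliary: geometric sums over `Rset` -/

lemma Rset_card (j : ℕ) : (Rset j).card = 2^j := by
  unfold Rset
  rcases Nat.eq_zero_or_pos j with h | h
  · simp [h]
  · rw [if_neg (Nat.pos_iff_ne_zero.mp h)]
    rw [Int.card_Icc]
    have h2 : (2:ℤ)^(j-1) + 1 - (-(2^(j-1) : ℤ) + 1) = 2^j := by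
      conv_rhs => rw [show j = (j-1) + 1 from (Nat.succ_pred_eq_of_pos h).symm]
      rw [pow_succ]
      ring
    rw [h2]
    rw [show ((2:ℤ)^j) = ((2^j : ℕ) : ℤ) by push_cast; ring, Int.toNat_natCast]

open Real in
lemma geom_Rset (N : ℤ) (j : ℕ) :
    ∑ k ∈ Rset j, (Complex.exp (2 * π * I * N * ((2:ℝ)^(-(j:ℤ)) : ℝ))) ^ k =
      if ((2:ℤ)^j ∣ N) then ((2:ℝ)^j : ℂ) else 0 := by
  set ζ : ℂ := Complex.exp (2 * π * I * N * ((2:ℝ)^(-(j:ℤ)) : ℝ)) with hζ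
  have hζne : ζ ≠ 0 := Complex.exp_ne_zero _
  by_cases hdvd : (2:ℤ)^j ∣ N
  · rw [if_pos hdvd]
    obtain ⟨M, hM⟩ := hdvd
    have hζ1 : ζ = 1 := by
      rw [hζ, hM]
      push_cast
      rw [show 2 * ↑π * I * ((2:ℂ) ^ j * (M:ℂ)) * (2:ℂ) ^ (-(j:ℤ))
          = (M:ℂ) * (2 * ↑π * I) * ((2:ℂ)^(j:ℤ) * (2:ℂ) ^ (-(j:ℤ))) by
        rw [zpow_natCast]; ring]
      rw [← zpow_add₀ (two_ne_zero), add_neg_cancel, zpow_zero, mul_one]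
      exact Complex.exp_int_mul_two_pi_mul_I M
    simp only [hζ1, one_zpow, Finset.sum_const, Rset_card, nsmul_eq_mul, mul_one]
    push_cast
    ring
  · rw [if_neg hdvd]
    have hπ : (2 * (π:ℂ) * I) ≠ 0 := by
      simp [Real.pi_ne_zero, Complex.I_ne_zero]
    have hζne1 : ζ ≠ 1 := by
      intro h1
      apply hdvd
      rw [hζ, Complex.exp_eq_one_iff] at h1
      obtain ⟨m, hm⟩ := h1
      have hm' : (2 * (π:ℂ) * I) * ((N:ℂ) * (2:ℂ)^(-(j:ℤ))) = (2 * (π:ℂ) * I) * m := by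
        push_cast at hm
        linear_combination hm
      have h2 : (N:ℂ) * (2:ℂ)^(-(j:ℤ)) = m := mul_left_cancel₀ hπ hm'
      rw [zpow_neg] at h2
      have h3 : N = m * 2^j := by
        field_simp at h2
        rw [mul_comm]
        exact_mod_cast h2
      exact ⟨m, by linarith⟩
    have hj : j ≠ 0 := by
      intro h0
      exact hdvd (by simp [h0])
    have hRset : Rset j = Finset.Icc (-(2^(j-1) : ℤ) + 1) (2^(j-1)) := by
      unfold Rset; rw [if_neg hj]
    set a : ℤ := -(2^(j-1) : ℤ) + 1 with ha
    have hcard : ((2^(j-1) : ℤ) + 1 - a).toNat = 2^j := by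
      have : (2^(j-1) : ℤ) + 1 - a = 2^j := by
        rw [ha]
        conv_rhs => rw [show j = (j-1) + 1 from (Nat.succ_pred_eq_of_pos (Nat.pos_of_ne_zero hj)).symm]
        rw [pow_succ]
        ring
      rw [this, show ((2:ℤ)^j) = ((2^j : ℕ) : ℤ) by push_cast; ring, Int.toNat_natCast]
    have hpow2 : (2:ℤ)^j = 2 * 2^(j-1) := by
      conv_lhs => rw [show j = (j-1) + 1 from (Nat.succ_pred_eq_of_pos (Nat.pos_of_ne_zero hj)).symm]
      rw [pow_succ]
      ring
    have hsum : ∑ k ∈ Rset j, ζ ^ k = ζ ^ a * ∑ t ∈ Finset.range (2^j), ζ ^ t := by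
      rw [hRset, Finset.mul_sum]
      apply Finset.sum_nbij' (i := fun k => (k - a).toNat) (j := fun t => a + (t : ℤ))
      · intro k hk
        rw [Finset.mem_Icc] at hk
        rw [Finset.mem_range, ← hcard]
        have h1 : 0 ≤ k - a := by omega
        omega
      · intro t ht
        rw [Finset.mem_range] at ht
        rw [Finset.mem_Icc]
        have : (t : ℤ) < 2^j := by
          rw [show ((2:ℤ)^j) = ((2^j : ℕ) : ℤ) by push_cast; ring]
          exact_mod_cast ht
        omega
      · intro k hk
        rw [Finset.mem_Icc] at hk
        have : 0 ≤ k - a := by omega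
        omega
      · intro t ht
        omega
      · intro k hk
        rw [Finset.mem_Icc] at hk
        have h0 : 0 ≤ k - a := by omega
        rw [← zpow_natCast ζ ((k - a).toNat), Int.toNat_of_nonneg h0, ← zpow_add₀ hζne]
        congr 1
        ring
    rw [hsum, geom_sum_eq hζne1]
    have hζpow : ζ ^ (2^j : ℕ) = 1 := by
      rw [hζ, ← Complex.exp_nat_mul]
      push_cast
      rw [show ((2:ℂ)^j) * (2 * ↑π * I * ↑N * (2:ℂ) ^ (-(j:ℤ)))
          = (N:ℂ) * (2 * ↑π * I) * ((2:ℂ)^(j:ℤ) * (2:ℂ) ^ (-(j:ℤ))) by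
        rw [zpow_natCast]; ring]
      rw [← zpow_add₀ (two_ne_zero), add_neg_cancel, zpow_zero, mul_one]
      exact Complex.exp_int_mul_two_pi_mul_I N
    rw [hζpow]
    simp

/-! ### Divisibility -/

lemma dvd_pow_odd (k : ℤ) (hk : Odd k) (J q : ℕ) :
    ((2:ℤ)^q ∣ 2^J * k) ↔ q ≤ J := by
  constructor
  · intro h
    by_contra hq
    push_neg at hq
    have h1 : (2:ℤ)^(J+1) ∣ 2^q := pow_dvd_pow 2 hq
    have h2 : (2:ℤ)^(J+1) ∣ 2^J * k := dvd_trans h1 h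
    rw [pow_succ] at h2
    have h3 : (2:ℤ) ∣ k := by
      rcases h2 with ⟨c, hc⟩
      refine ⟨c, ?_⟩
      have h4 : (2:ℤ)^J ≠ 0 := by positivity
      have := hc
      exact mul_left_cancel₀ h4 (by linarith)
    rw [← Int.not_even_iff_odd] at hk
    obtain ⟨c, hc⟩ := h3
    exact hk ⟨c, by linarith⟩
  · intro h
    exact dvd_mul_of_dvd_left (pow_dvd_pow 2 h) k

/-! ### Main theorem -/

theorem parseval_frame_necessity_second
    (ρ : ℕ → ℕ) (hρ : ∀ j, 0 < ρ j) (ψ : ℕ → ℕ → PL2)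
    (hframe : IsParsevalFrame ρ ψ) :
    ∀ k : ℤ, Odd k → ∀ n : ℤ, ∀ j : ℕ,
      ∑ q ∈ Finset.range (j+1), (2:ℂ)^q *
        ∑ m ∈ Finset.Icc 1 (ρ q),
          conj (fCoeff (ψ q m) n) * fCoeff (ψ q m) (2^j * k + n) = 0 := by
  intro k₀ hk₀ n J
  set N : ℤ := 2^J * k₀ with hN
  set n' : ℤ := 2^J * k₀ + n with hn'
  set u : ℕ → ℕ → ℤ → PL2 := fun j m k =>
    transLp (((2:ℝ)^(-(j:ℤ)) * (k:ℝ) : ℝ) : AddCircle (1:ℝ)) (ψ j m) with hu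
  have hinner : ∀ (f : PL2) (j : ℕ) (m : ℕ) (k : ℤ),
      shiftInner f (ψ j m) j k = inner ℂ (u j m k) f := by
    intro f j m k
    rw [hu, inner_transLp]
    rfl
  have hPF : ∀ f : PL2, ‖f‖^2 = ∑' j : ℕ, ∑ m ∈ Finset.Icc 1 (ρ j), ∑ k ∈ Rset j,
      ‖(inner ℂ (u j m k) f : ℂ)‖^2 := by
    intro f
    rw [hframe f]
    congr 1
    funext j
    exact Finset.sum_congr rfl fun m _ => Finset.sum_congr rfl fun k _ => by rw [hinner]
  -- apply polarization to the pair (e_{n'}, e_n)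
  set en : PL2 := fourierLp 2 n with hen
  set en' : PL2 := fourierLp 2 n' with hen'
  have hpol := parseval_polar ρ u hPF en' en
  -- the inner ℂ products with Fourier modes
  have hcoeff : ∀ (v : PL2) (m : ℤ), (inner ℂ v (fourierLp 2 m) : ℂ)
      = conj (fourierCoeff (v : AddCircle (1:ℝ) → ℂ) m) := by
    intro v m
    rw [← inner_conj_symm]
    congr 1
    rw [← fourierBasis_repr]
    rw [HilbertBasis.repr_apply_apply, coe_fourierBasis]
  -- orthogonality
  have hk0 : k₀ ≠ 0 := by
    rintro rfl
    simp at hk₀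
  have hNne : N ≠ 0 := by
    rw [hN]
    exact mul_ne_zero (by positivity) hk0
  have hne : n' ≠ n := by
    rw [hn']
    intro h
    apply hNne
    rw [hN]
    omega
  have horth : (inner ℂ en' en : ℂ) = 0 := orthonormal_fourier.2 hne
  rw [horth] at hpol
  -- per-term computation
  open Real in
  have hterm : ∀ (j : ℕ) (m : ℕ) (k : ℤ),
      conj (inner ℂ (u j m k) en' : ℂ) * (inner ℂ (u j m k) en : ℂ)
      = (Complex.exp (2 * π * I * N * ((2:ℝ)^(-(j:ℤ)) : ℝ))) ^ k
        * (conj (fCoeff (ψ j m) n) * fCoeff (ψ j m) n') := by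
    intro j m k
    rw [hcoeff, hcoeff, conj_conj]
    have hu1 : fourierCoeff ((u j m k) : AddCircle (1:ℝ) → ℂ) n'
        = Complex.exp (2 * π * I * n' * (((2:ℝ)^(-(j:ℤ)) * (k:ℝ) : ℝ) : ℂ)) * fCoeff (ψ j m) n' :=
      fourierCoeff_transLp _ _ _
    have hu2 : fourierCoeff ((u j m k) : AddCircle (1:ℝ) → ℂ) n
        = Complex.exp (2 * π * I * n * (((2:ℝ)^(-(j:ℤ)) * (k:ℝ) : ℝ) : ℂ)) * fCoeff (ψ j m) n :=
      fourierCoeff_transLp _ _ _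
    rw [hu1, hu2, map_mul]
    have hexp : Complex.exp (2 * π * I * n' * (((2:ℝ)^(-(j:ℤ)) * (k:ℝ) : ℝ) : ℂ))
        * conj (Complex.exp (2 * π * I * n * (((2:ℝ)^(-(j:ℤ)) * (k:ℝ) : ℝ) : ℂ)))
        = (Complex.exp (2 * π * I * N * ((2:ℝ)^(-(j:ℤ)) : ℝ))) ^ k := by
      rw [← Complex.exp_conj, ← Complex.exp_add, ← Complex.exp_int_mul]
      congr 1
      simp only [map_mul, map_zpow₀, Complex.conj_I, Complex.conj_ofReal, map_ofNat, map_intCast]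
      have hn'c : ((n' : ℤ) : ℂ) = (N : ℂ) + (n : ℂ) := by
        rw [hn', hN]
        push_cast
        ring
      rw [hn'c]
      push_cast
      ring
    calc Complex.exp (2 * π * I * n' * (((2:ℝ)^(-(j:ℤ)) * (k:ℝ) : ℝ) : ℂ)) * fCoeff (ψ j m) n'
          * (conj (Complex.exp (2 * π * I * n * (((2:ℝ)^(-(j:ℤ)) * (k:ℝ) : ℝ) : ℂ)))
              * conj (fCoeff (ψ j m) n))
        = (Complex.exp (2 * π * I * n' * (((2:ℝ)^(-(j:ℤ)) * (k:ℝ) : ℝ) : ℂ))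
            * conj (Complex.exp (2 * π * I * n * (((2:ℝ)^(-(j:ℤ)) * (k:ℝ) : ℝ) : ℂ))))
          * (conj (fCoeff (ψ j m) n) * fCoeff (ψ j m) n') := by ring
      _ = _ := by rw [hexp]
  -- sum over each level
  open Real in
  have hlevel : ∀ j : ℕ,
      (∑ m ∈ Finset.Icc 1 (ρ j), ∑ k ∈ Rset j,
        conj (inner ℂ (u j m k) en' : ℂ) * (inner ℂ (u j m k) en : ℂ))
      = (if ((2:ℤ)^j ∣ N) then ((2:ℝ)^j : ℂ) else 0)
        * ∑ m ∈ Finset.Icc 1 (ρ j), conj (fCoeff (ψ j m) n) * fCoeff (ψ j m) n' := by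
    intro j
    rw [Finset.mul_sum]
    apply Finset.sum_congr rfl
    intro m _
    rw [Finset.sum_congr rfl (fun k _ => hterm j m k), ← Finset.sum_mul, geom_Rset]
  rw [tsum_congr hlevel] at hpol
  -- the sum is supported on range (J+1)
  have hvanish : ∀ j ∉ Finset.range (J+1),
      (if ((2:ℤ)^j ∣ N) then ((2:ℝ)^j : ℂ) else 0)
        * ∑ m ∈ Finset.Icc 1 (ρ j), conj (fCoeff (ψ j m) n) * fCoeff (ψ j m) n' = 0 := by
    intro j hj
    rw [Finset.mem_range, Nat.lt_succ_iff] at hj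
    rw [if_neg, zero_mul]
    rw [hN, dvd_pow_odd k₀ hk₀ J j]
    exact hj
  rw [tsum_eq_sum hvanish] at hpol
  rw [← hpol]
  apply Finset.sum_congr rfl
  intro q hq
  rw [Finset.mem_range, Nat.lt_succ_iff] at hq
  rw [if_pos]
  · norm_num
  · rw [hN]
    exact (dvd_pow_odd k₀ hk₀ J q).mpr hq
end
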